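/- arXiv:1607.08758 — 4 statements merged into one kernel-verified Lean document; each statement's English description precedes it below -/
import Mathlib

section
/- For every positive integer m and every integer t ≥ −1, the sum ∑_{r ∣ m} (1/r³) · N₀(t·(m/r)²), taken over the positive divisors r of m, is positive. (This is the arithmetic content of the proof that the genus 0 reduced Gromov–Witten invariant N₀(L) of a K3 surface is nonzero for every admissible class L, via the full Yau–Zaslow formula N₀(L) = ∑_{r ∣ m(L)} (1/r³)·N₀(⟨L,L⟩/(2r²)), where L = m·L̃ with L̃ primitive and ⟨L̃,L̃⟩ = 2t.) -/
open PowerSeries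

/-- The polynomial (as a power series) `∏_{n=1}^{N} (1 - q^n)^{24}` in `ℚ[[q]]`. -/
noncomputable def yauZaslowDen (N : ℕ) : PowerSeries ℚ :=
  ∏ n ∈ Finset.Icc 1 N, (1 - (PowerSeries.X : PowerSeries ℚ) ^ n) ^ 24

/-- The genus 0 reduced Gromov–Witten invariant `N₀(ℓ)`: the coefficient of `q^{ℓ+1}`
in `∏_{n≥1} (1 - q^n)^{-24}` for `ℓ ≥ -1`, and `0` for `ℓ < -1`. -/
noncomputable def N0 (ℓ : ℤ) : ℚ :=
  if ℓ < -1 then 0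
  else PowerSeries.coeff (R := ℚ) (ℓ + 1).toNat (yauZaslowDen (ℓ + 1).toNat)⁻¹

/-- Geometric-type series `∑_{n ∣ k} q^k` inverting `1 - q^n`. -/
noncomputable def geomYZ (n : ℕ) : PowerSeries ℚ :=
  PowerSeries.mk fun k => if n ∣ k then 1 else 0

lemma geomYZ_coeff_nonneg (n k : ℕ) : 0 ≤ PowerSeries.coeff k (geomYZ n) := by
  simp only [geomYZ, coeff_mk]
  split <;> norm_num

lemma one_sub_X_pow_mul_geomYZ (n : ℕ) (hn : 0 < n) :
    (1 - (PowerSeries.X : PowerSeries ℚ) ^ n) * geomYZ n = 1 := by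
  ext k
  rw [sub_mul, one_mul, map_sub, coeff_X_pow_mul']
  rcases Nat.eq_zero_or_pos k with rfl | hk
  · simp [geomYZ, coeff_mk, hn.ne', Nat.not_le_of_lt hn]
  · rw [PowerSeries.coeff_one, if_neg hk.ne']
    simp only [geomYZ, coeff_mk]
    by_cases h : n ≤ k
    · rw [if_pos h]
      by_cases hd : n ∣ k
      · rw [if_pos hd, if_pos ((Nat.dvd_sub hd dvd_rfl)), sub_self]
      · rw [if_neg hd, if_neg, sub_zero]
        intro hd2
        exact hd ((Nat.sub_add_cancel h) ▸ Nat.dvd_add hd2 dvd_rfl)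
    · rw [if_neg h, sub_zero, if_neg]
      intro hd
      exact h (Nat.le_of_dvd hk hd)

/-- The explicit inverse `∏_{n=1}^N (∑_{n∣k} q^k)^{24}`. -/
noncomputable def geomProd (N : ℕ) : PowerSeries ℚ :=
  ∏ n ∈ Finset.Icc 1 N, (geomYZ n) ^ 24

lemma coeff_mul_nonneg {φ ψ : PowerSeries ℚ}
    (hφ : ∀ k, 0 ≤ PowerSeries.coeff k φ) (hψ : ∀ k, 0 ≤ PowerSeries.coeff k ψ) :
    ∀ k, 0 ≤ PowerSeries.coeff k (φ * ψ) := by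
  intro k
  rw [coeff_mul]
  exact Finset.sum_nonneg fun x _ => mul_nonneg (hφ _) (hψ _)

lemma coeff_geomProd_nonneg (N k : ℕ) : 0 ≤ PowerSeries.coeff k (geomProd N) := by
  refine Finset.prod_induction _ (fun φ => ∀ k, 0 ≤ PowerSeries.coeff k φ)
    (fun a b ha hb => coeff_mul_nonneg ha hb) (fun k => ?_) (fun n _ => ?_) k
  · rw [PowerSeries.coeff_one]; split <;> norm_num
  · induction 24 with
    | zero => simp [PowerSeries.coeff_one]; intro k; split <;> norm_num
    | succ j ih => rw [pow_succ]; exact coeff_mul_nonneg ih (geomYZ_coeff_nonneg n)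

lemma constantCoeff_geomProd (N : ℕ) : PowerSeries.constantCoeff (geomProd N) = 1 := by
  rw [geomProd, map_prod]
  refine Finset.prod_eq_one fun n _ => ?_
  rw [map_pow]
  have : PowerSeries.constantCoeff (geomYZ n) = 1 := by
    simp [geomYZ, ← PowerSeries.coeff_zero_eq_constantCoeff, coeff_mk]
  rw [this, one_pow]

lemma coeff_mul_pos {φ ψ : PowerSeries ℚ} (k : ℕ)
    (hφ : ∀ j, 0 ≤ PowerSeries.coeff j φ) (hφk : 0 < PowerSeries.coeff k φ)
    (hψ : ∀ j, 0 ≤ PowerSeries.coeff j ψ) (hψ0 : 0 < PowerSeries.coeff 0 ψ) :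
    0 < PowerSeries.coeff k (φ * ψ) := by
  rw [coeff_mul]
  refine Finset.sum_pos' (fun x _ => mul_nonneg (hφ _) (hψ _)) ⟨(k, 0), ?_, ?_⟩
  · simp [Finset.mem_antidiagonal]
  · exact mul_pos hφk hψ0

lemma coeff_geomProd_pos (N : ℕ) (k : ℕ) (hN : 0 < N ∨ k = 0) :
    0 < PowerSeries.coeff k (geomProd N) := by
  rcases hN with hN | rfl
  · have h1 : (1 : ℕ) ∈ Finset.Icc 1 N := Finset.mem_Icc.2 ⟨le_refl 1, hN⟩
    rw [geomProd, ← Finset.mul_prod_erase _ _ h1]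
    have hg1 : ∀ j, 0 < PowerSeries.coeff j (geomYZ 1) := by
      intro j; simp [geomYZ, coeff_mk]
    have hrest : ∀ j, 0 ≤ PowerSeries.coeff j (∏ n ∈ (Finset.Icc 1 N).erase 1, geomYZ n ^ 24) := by
      intro j
      refine Finset.prod_induction _ (fun φ => ∀ k, 0 ≤ PowerSeries.coeff k φ)
        (fun a b ha hb => coeff_mul_nonneg ha hb) (fun k => ?_) (fun n _ => ?_) j
      · rw [PowerSeries.coeff_one]; split <;> norm_num
      · induction 24 with
        | zero => simp [PowerSeries.coeff_one]; intro k; split <;> norm_num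
        | succ j ih => rw [pow_succ]; exact coeff_mul_nonneg ih (geomYZ_coeff_nonneg n)
    have hrest0 : 0 < PowerSeries.coeff 0 (∏ n ∈ (Finset.Icc 1 N).erase 1, geomYZ n ^ 24) := by
      rw [PowerSeries.coeff_zero_eq_constantCoeff, map_prod]
      rw [Finset.prod_eq_one fun n _ => ?_]
      · norm_num
      · rw [map_pow]
        have : PowerSeries.constantCoeff (geomYZ n) = 1 := by
          simp [geomYZ, ← PowerSeries.coeff_zero_eq_constantCoeff, coeff_mk]
        rw [this, one_pow]
    -- (geomYZ 1)^24 has all coefficients positive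
    have hpow : ∀ j, 0 < PowerSeries.coeff j ((geomYZ 1) ^ 24) := by
      have : ∀ (m : ℕ) (j : ℕ), 0 < PowerSeries.coeff j ((geomYZ 1) ^ (m + 1)) := by
        intro m
        induction m with
        | zero => intro j; rw [pow_one]; exact hg1 j
        | succ i ih =>
          intro j
          rw [pow_succ]
          exact coeff_mul_pos j (fun a => (ih a).le) (ih j) (fun a => (hg1 a).le) (hg1 0)
      intro j; exact this 23 j
    exact coeff_mul_pos k (fun a => (hpow a).le) (hpow k)
      hrest hrest0
  · rw [PowerSeries.coeff_zero_eq_constantCoeff, constantCoeff_geomProd]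
    norm_num

lemma constantCoeff_yauZaslowDen (N : ℕ) :
    PowerSeries.constantCoeff (yauZaslowDen N) = 1 := by
  rw [yauZaslowDen, map_prod]
  refine Finset.prod_eq_one fun n hn => ?_
  rw [map_pow, map_sub, map_pow, map_one, PowerSeries.constantCoeff_X]
  have : (0 : ℚ) ^ n = 0 := by
    have := (Finset.mem_Icc.1 hn).1
    exact zero_pow (by omega)
  rw [this, sub_zero, one_pow]

lemma yauZaslowDen_inv (N : ℕ) : (yauZaslowDen N)⁻¹ = geomProd N := by
  rw [PowerSeries.inv_eq_iff_mul_eq_one (by rw [constantCoeff_yauZaslowDen]; norm_num)]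
  rw [geomProd, yauZaslowDen, ← Finset.prod_mul_distrib]
  refine Finset.prod_eq_one fun n hn => ?_
  rw [← mul_pow, mul_comm, one_sub_X_pow_mul_geomYZ n (by exact (Finset.mem_Icc.1 hn).1), one_pow]

lemma N0_pos {ℓ : ℤ} (hℓ : -1 ≤ ℓ) : 0 < N0 ℓ := by
  rw [N0, if_neg (not_lt.2 hℓ)]
  rw [yauZaslowDen_inv]
  refine coeff_geomProd_pos _ _ ?_
  rcases eq_or_lt_of_le hℓ with h | h
  · right; omega
  · left; omega

lemma N0_nonneg (ℓ : ℤ) : 0 ≤ N0 ℓ := by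
  by_cases h : ℓ < -1
  · rw [N0, if_pos h]
  · exact (N0_pos (not_lt.1 h)).le

/-- The full Yau–Zaslow sum `∑_{r ∣ m} (1/r³) · N₀(t·(m/r)²)` is positive for every
positive integer `m` and every integer `t ≥ -1`. -/
theorem yauZaslow_sum_pos :
    ∀ m : ℕ, 0 < m → ∀ t : ℤ, -1 ≤ t →
      0 < ∑ r ∈ m.divisors, (1 / (r : ℚ) ^ 3) * N0 (t * ((m / r : ℕ) : ℤ) ^ 2) := by
  intro m hm t ht
  refine Finset.sum_pos' (fun r hr => ?_) ⟨m, Nat.mem_divisors_self m hm.ne', ?_⟩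
  · have hr0 : 0 < r := Nat.pos_of_mem_divisors hr
    exact mul_nonneg (by positivity) (N0_nonneg _)
  · rw [Nat.div_self hm]
    have : (t * ((1 : ℕ) : ℤ) ^ 2) = t := by norm_num
    rw [this]
    have hm0 : (0 : ℚ) < (m : ℚ) := by exact_mod_cast hm
    exact mul_pos (by positivity) (N0_pos ht)
end

section
/- For every positive integer m and every integer t ≥ 0, the sum ∑_{r ∣ m} r · N₁(t·(m/r)²), taken over the positive divisors r of m, is positive. (This is the arithmetic content of the proof that the genus 1 reduced Gromov–Witten invariant N₁(L) of a K3 surface is nonzero for every admissible class L with ⟨L,L⟩ ≥ 0, via the multiple cover formula N₁(L) = ∑_{r ∣ m(L)} r·N₁(⟨L,L⟩/(2r²)), where L = m·L̃ with L̃ primitive and ⟨L̃,L̃⟩ = 2t.) -/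
open PowerSeries

/-- The genus 1 reduced Gromov–Witten invariant `N₁(ℓ)`: the coefficient of `q^{ℓ+1}`
in `(∑_{k≥1} k·σ₁(k)·q^k) · ∏_{n≥1} (1 - q^n)^{-24}` for `ℓ ≥ 0`, and `0` for `ℓ < 0`. -/
noncomputable def N1 (ℓ : ℤ) : ℚ :=
  if ℓ < 0 then 0
  else PowerSeries.coeff (R := ℚ) (ℓ + 1).toNat
    ((∑ k ∈ Finset.Icc 1 (ℓ + 1).toNat,
        PowerSeries.C (R := ℚ) ((k : ℚ) * (ArithmeticFunction.sigma 1 k : ℚ)) * (PowerSeries.X : PowerSeries ℚ) ^ k)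
      * (yauZaslowDen (ℓ + 1).toNat)⁻¹)

/-- Geometric series in `X^n`. -/
noncomputable def geomN (n : ℕ) : PowerSeries ℚ :=
  PowerSeries.mk fun k => if n ∣ k then 1 else 0

lemma one_sub_pow_mul_geomN (n : ℕ) (hn : 0 < n) :
    (1 - (PowerSeries.X : PowerSeries ℚ) ^ n) * geomN n = 1 := by
  ext k
  rw [sub_mul, one_mul, map_sub, PowerSeries.coeff_X_pow_mul', geomN, PowerSeries.coeff_mk,
    PowerSeries.coeff_one]
  rcases Nat.eq_zero_or_pos k with rfl | hk
  · simp [hn.ne']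
  · rw [if_neg hk.ne']
    by_cases h : n ∣ k
    · rw [if_pos h, if_pos (Nat.le_of_dvd hk h), PowerSeries.coeff_mk,
        if_pos (Nat.dvd_sub h dvd_rfl)]
      ring
    · rw [if_neg h]
      split_ifs with hle
      · rw [PowerSeries.coeff_mk, if_neg]
        · ring
        · intro hd
          exact h (by simpa [Nat.sub_add_cancel hle] using Nat.dvd_add hd (dvd_refl n))
      · ring

lemma geomN_nonneg (n k : ℕ) : 0 ≤ PowerSeries.coeff (R := ℚ) k (geomN n) := by
  rw [geomN, PowerSeries.coeff_mk]
  split_ifs <;> norm_num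

/-- Nonnegativity of all coefficients. -/
def NN (f : PowerSeries ℚ) : Prop := ∀ k, 0 ≤ PowerSeries.coeff (R := ℚ) k f

lemma NN.mul {f g : PowerSeries ℚ} (hf : NN f) (hg : NN g) : NN (f * g) := by
  intro k
  rw [PowerSeries.coeff_mul]
  exact Finset.sum_nonneg fun p _ => mul_nonneg (hf p.1) (hg p.2)

lemma NN.one : NN (1 : PowerSeries ℚ) := by
  intro k; rw [PowerSeries.coeff_one]; split_ifs <;> norm_num

lemma NN.pow {f : PowerSeries ℚ} (hf : NN f) (n : ℕ) : NN (f ^ n) := by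
  induction n with
  | zero => simpa using NN.one
  | succ n ih => rw [pow_succ]; exact ih.mul hf

lemma NN.prod {s : Finset ℕ} {f : ℕ → PowerSeries ℚ} (hf : ∀ n ∈ s, NN (f n)) :
    NN (∏ n ∈ s, f n) := by
  classical
  induction s using Finset.induction_on with
  | empty => simpa using NN.one
  | insert _ _ hns ih =>
    rw [Finset.prod_insert hns]
    exact (hf _ (Finset.mem_insert_self _ _)).mul
      (ih fun n hn => hf n (Finset.mem_insert_of_mem hn))

/-- The inverse of the Yau–Zaslow denominator, explicitly. -/
noncomputable def yzInv (N : ℕ) : PowerSeries ℚ :=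
  ∏ n ∈ Finset.Icc 1 N, (geomN n) ^ 24

lemma yauZaslowDen_mul_yzInv (N : ℕ) : yauZaslowDen N * yzInv N = 1 := by
  rw [yauZaslowDen, yzInv, ← Finset.prod_mul_distrib]
  apply Finset.prod_eq_one
  intro n hn
  rw [← mul_pow, one_sub_pow_mul_geomN n (Finset.mem_Icc.mp hn).1, one_pow]

lemma yauZaslowDen_inv_eq (N : ℕ) : (yauZaslowDen N)⁻¹ = yzInv N := by
  have hc : PowerSeries.constantCoeff (R := ℚ) (yauZaslowDen N) ≠ 0 := by
    rw [yauZaslowDen, map_prod]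
    apply Finset.prod_ne_zero_iff.mpr
    intro n hn
    rw [map_pow, map_sub, map_one, map_pow, PowerSeries.constantCoeff_X]
    have hn1 := (Finset.mem_Icc.mp hn).1
    have : (0:ℚ) ^ n = 0 := zero_pow (by omega : n ≠ 0)
    · rw [this]; norm_num
  rw [PowerSeries.inv_eq_iff_mul_eq_one hc, mul_comm]
  exact yauZaslowDen_mul_yzInv N

lemma NN_yzInv (N : ℕ) : NN (yzInv N) :=
  NN.prod fun n _ => NN.pow (geomN_nonneg n) 24

lemma constantCoeff_yzInv (N : ℕ) : PowerSeries.coeff (R := ℚ) 0 (yzInv N) = 1 := by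
  rw [PowerSeries.coeff_zero_eq_constantCoeff, yzInv, map_prod]
  apply Finset.prod_eq_one
  intro n hn
  rw [map_pow]
  have : PowerSeries.constantCoeff (R := ℚ) (geomN n) = 1 := by
    rw [← PowerSeries.coeff_zero_eq_constantCoeff, geomN, PowerSeries.coeff_mk,
      if_pos (dvd_zero n)]
  rw [this, one_pow]

lemma sigma_pos (k : ℕ) (hk : 0 < k) : 0 < (ArithmeticFunction.sigma 1 k : ℚ) := by
  have : 0 < ArithmeticFunction.sigma 1 k := by
    rw [ArithmeticFunction.sigma_apply]
    apply Finset.sum_pos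
    · intro d hd
      have := Nat.pos_of_mem_divisors hd
      positivity
    · exact ⟨k, Nat.mem_divisors_self k hk.ne'⟩
  exact_mod_cast this

set_option maxHeartbeats 1000000 in
lemma N1_pos (ℓ : ℤ) (hℓ : 0 ≤ ℓ) : 0 < N1 ℓ := by
  rw [N1, if_neg (not_lt.mpr hℓ)]
  set N := (ℓ + 1).toNat with hN
  have hN1 : 1 ≤ N := by omega
  rw [yauZaslowDen_inv_eq]
  set S : PowerSeries ℚ := ∑ k ∈ Finset.Icc 1 N,
      PowerSeries.C (R := ℚ) ((k : ℚ) * (ArithmeticFunction.sigma 1 k : ℚ)) * PowerSeries.X ^ k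
    with hS
  have hScoeff : ∀ j, PowerSeries.coeff (R := ℚ) j S =
      if j ∈ Finset.Icc 1 N then (j : ℚ) * (ArithmeticFunction.sigma 1 j : ℚ) else 0 := by
    intro j
    rw [hS, map_sum]
    simp only [PowerSeries.coeff_C_mul, PowerSeries.coeff_X_pow, mul_ite, mul_one, mul_zero]
    rw [Finset.sum_ite_eq]
  have hSnn : ∀ j, 0 ≤ PowerSeries.coeff (R := ℚ) j S := by
    intro j
    rw [hScoeff]
    split_ifs with h
    · have := (Finset.mem_Icc.mp h).1
      have := sigma_pos j (by omega)
      positivity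
    · exact le_rfl
  rw [PowerSeries.coeff_mul]
  apply Finset.sum_pos' (fun p _ => mul_nonneg (hSnn p.1) (NN_yzInv N p.2))
  refine ⟨(N, 0), Finset.HasAntidiagonal.mem_antidiagonal.mpr (by simp), ?_⟩
  rw [constantCoeff_yzInv, mul_one, hScoeff, if_pos (Finset.mem_Icc.mpr ⟨hN1, le_rfl⟩)]
  have h1 := sigma_pos N (by omega)
  have h2 : (0:ℚ) < N := by exact_mod_cast (by omega : 0 < N)
  positivity

/-- The genus 1 multiple cover sum `∑_{r ∣ m} r · N₁(t·(m/r)²)` is positive for every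
positive integer `m` and every integer `t ≥ 0`. -/
theorem multipleCover_sum_pos :
    ∀ m : ℕ, 0 < m → ∀ t : ℤ, 0 ≤ t →
      0 < ∑ r ∈ m.divisors, (r : ℚ) * N1 (t * ((m / r : ℕ) : ℤ) ^ 2) := by
  intro m hm t ht
  apply Finset.sum_pos
  · intro r hr
    have hr1 : 0 < r := Nat.pos_of_mem_divisors hr
    have harg : (0:ℤ) ≤ t * ((m / r : ℕ) : ℤ) ^ 2 := mul_nonneg ht (sq_nonneg _)
    have := N1_pos _ harg
    positivity
  · exact ⟨m, Nat.mem_divisors_self m hm.ne'⟩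
end

section
/- Let n₀, n₁, s be positive rational numbers. The 4×3 matrix with rows (−2, 2s, 0), (24n₁, (1/2)n₀s³, 36n₁s), (288n₁, −12n₁s + (1/2)n₀s³, 288n₁s), (0, 528n₁ + (1/2)n₀s², 6336n₁) has rank 3 (maximal rank). -/
/-- The 4×3 coefficient matrix of Case A of the codimension 1 analysis (in the
unknowns `κ_{[L³;0]}`, `κ_{[L;1]}`, `Z(L)`) has maximal rank 3, whenever
`n₀ = N₀(L)`, `n₁ = N₁(L)` and `s = ⟨L,L⟩` are positive. -/
theorem caseA_matrix_rank (n₀ n₁ s : ℚ) (hn₀ : 0 < n₀) (hn₁ : 0 < n₁) (hs : 0 < s) :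
    Matrix.rank
      !![-2, 2 * s, 0;
         24 * n₁, (1 / 2) * n₀ * s ^ 3, 36 * n₁ * s;
         288 * n₁, -12 * n₁ * s + (1 / 2) * n₀ * s ^ 3, 288 * n₁ * s;
         0, 528 * n₁ + (1 / 2) * n₀ * s ^ 2, 6336 * n₁] = 3 := by
  set M : Matrix (Fin 4) (Fin 3) ℚ :=
      !![-2, 2 * s, 0;
         24 * n₁, (1 / 2) * n₀ * s ^ 3, 36 * n₁ * s;
         288 * n₁, -12 * n₁ * s + (1 / 2) * n₀ * s ^ 3, 288 * n₁ * s;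
         0, 528 * n₁ + (1 / 2) * n₀ * s ^ 2, 6336 * n₁] with hM
  have hker : LinearMap.ker M.mulVecLin = ⊥ := by
    rw [LinearMap.ker_eq_bot']
    intro v hv
    have h0 := congrFun hv 0
    have h1 := congrFun hv 1
    have h2 := congrFun hv 2
    have h3 := congrFun hv 3
    simp [hM, Matrix.mulVecLin_apply, Matrix.mulVec, dotProduct,
      Fin.sum_univ_three, Matrix.cons_val_zero, Matrix.cons_val_one, Matrix.head_cons,
      Matrix.cons_val_two, Matrix.tail_cons, Matrix.cons_val_three] at h0 h1 h2 h3
    have key : (-483 / 2 * (n₀ * s ^ 3)) * v 1 = 0 := by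
      linear_combination s * h3 + 44 * h2 - 528 * h1
    have hb : v 1 = 0 := by
      rcases mul_eq_zero.mp key with h | h
      · exfalso
        have : (0:ℚ) < n₀ * s ^ 3 := by positivity
        nlinarith
      · exact h
    have hc : v 2 = 0 := by
      have : (6336 * n₁) * v 2 = 0 := by linear_combination h3 - (528 * n₁ + 1 / 2 * n₀ * s ^ 2) * hb
      rcases mul_eq_zero.mp this with h | h
      · exfalso; nlinarith
      · exact h
    have ha : v 0 = 0 := by linear_combination -1/2 * h0 + s * hb
    funext i
    fin_cases i
    · exact ha
    · exact hb
    · exact hc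
  have := LinearMap.finrank_range_add_finrank_ker M.mulVecLin
  rw [hker, finrank_bot] at this
  simpa [Matrix.rank] using this
end

section
/- Let n₀, n₁, h be positive rational numbers. The determinant of the 4×4 matrix with rows (−2, 2h, 0, 0), (24n₁, (1/2)n₀h³, 36n₁h, n₀h³), (288n₁, −12n₁h + (1/2)n₀h³, 288n₁h, n₀h³), (0, 528n₁ + (1/2)n₀h², 6336n₁, n₀h²) is nonzero. -/
/-- The 4×4 coefficient matrix (in the unknowns `κ_{[H³;0]}`, `κ_{[H;1]}`, `Z(H)`, `λ`)
obtained by exporting WDVV and Getzler relations for `Λ = (2ℓ)`, `L = H`, has nonzero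
determinant whenever `n₀ = N₀(ℓ)`, `n₁ = N₁(ℓ)` and `h = 2ℓ` are positive. -/
theorem lambda_matrix_det_ne_zero (n₀ n₁ h : ℚ) (hn₀ : 0 < n₀) (hn₁ : 0 < n₁) (hh : 0 < h) :
    Matrix.det
      !![-2, 2 * h, 0, 0;
         24 * n₁, (1 / 2) * n₀ * h ^ 3, 36 * n₁ * h, n₀ * h ^ 3;
         288 * n₁, -12 * n₁ * h + (1 / 2) * n₀ * h ^ 3, 288 * n₁ * h, n₀ * h ^ 3;
         0, 528 * n₁ + (1 / 2) * n₀ * h ^ 2, 6336 * n₁, n₀ * h ^ 2] ≠ 0 := by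
  have key : Matrix.det
      !![-2, 2 * h, 0, 0;
         24 * n₁, (1 / 2) * n₀ * h ^ 3, 36 * n₁ * h, n₀ * h ^ 3;
         288 * n₁, -12 * n₁ * h + (1 / 2) * n₀ * h ^ 3, 288 * n₁ * h, n₀ * h ^ 3;
         0, 528 * n₁ + (1 / 2) * n₀ * h ^ 2, 6336 * n₁, n₀ * h ^ 2]
      = -2921184 * n₀ * n₁ ^ 2 * h ^ 4 := by
    simp [Matrix.det_succ_row_zero, Fin.sum_univ_succ, Fin.succAbove]
    ring
  rw [key]
  have : 0 < 2921184 * n₀ * n₁ ^ 2 * h ^ 4 := by positivity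
  intro hcontra
  nlinarith [this]
end
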